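/- Let O be a complete discrete valuation ring with uniformizer π and residue field of odd order q, and let i ≥ r/2. The map x ↦ 1 + π^i x induces a group isomorphism from the additive group sl_2(O/π^{r-i}) (trace-zero 2×2 matrices) onto the kernel of the reduction map SL_2(O/π^r) → SL_2(O/π^i). -/

import Mathlib

section CongAux
variable {O : Type*} [CommRing O] [IsDomain O]

/-- multiplication by `π^i` induces a linear map `O/π^(r-i) → O/π^r`. -/
noncomputable def muAux (π : O) (r i : ℕ) (hir : i ≤ r) :
    (O ⧸ Ideal.span {π ^ (r - i)}) →ₗ[O] (O ⧸ Ideal.span {π ^ r}) :=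
  Submodule.liftQ _ ((Ideal.span {π ^ r}).mkQ ∘ₗ LinearMap.mulLeft O (π ^ i)) (by
    intro a ha
    rw [Ideal.mem_span_singleton] at ha
    obtain ⟨c, rfl⟩ := ha
    simp only [LinearMap.mem_ker, LinearMap.comp_apply, LinearMap.mulLeft_apply,
      Submodule.mkQ_apply, Submodule.Quotient.mk_eq_zero, Ideal.mem_span_singleton]
    exact ⟨c, by rw [← mul_assoc, ← pow_add, Nat.add_sub_cancel' hir]⟩)

theorem muAux_mk (π : O) (r i : ℕ) (hir : i ≤ r) (a : O) :
    muAux π r i hir (Ideal.Quotient.mk _ a) = Ideal.Quotient.mk _ (π ^ i * a) := by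
  rw [← Ideal.Quotient.mk_eq_mk, ← Ideal.Quotient.mk_eq_mk]
  rfl

end CongAux

/-- Let `O` be a complete DVR with uniformizer `π` and residue field of odd finite order,
and `r ≥ i ≥ r/2`.  The map `x ↦ 1 + π^i x` induces a group isomorphism from the additive
group `sl_2(O/π^{r-i})` of trace-zero `2×2` matrices onto the kernel of the reduction map
`SL_2(O/π^r) → SL_2(O/π^i)`. -/
theorem congruence_kernel_iso_sl2 {O : Type*} [CommRing O] [IsDomain O]
    [IsDiscreteValuationRing O] (π : O) (hπ : Irreducible π)
    [IsAdicComplete (Ideal.span {π}) O] [Finite (O ⧸ Ideal.span {π})]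
    (hodd : Odd (Nat.card (O ⧸ Ideal.span {π})))
    (r i : ℕ) (hir : i ≤ r) (h2i : r ≤ 2 * i) :
    let sl2 := LinearMap.ker (Matrix.traceLinearMap (Fin 2)
      (O ⧸ Ideal.span {π ^ (r - i)}) (O ⧸ Ideal.span {π ^ (r - i)}))
    let K := MonoidHom.ker (Matrix.SpecialLinearGroup.map
      (Ideal.Quotient.factor (S := Ideal.span {π ^ r}) (T := Ideal.span {π ^ i})
        (Ideal.span_singleton_le_span_singleton.mpr (pow_dvd_pow π hir))))
    ∃ φ : sl2 ≃ K,
      (∀ a b : sl2, φ (a + b) = φ a * φ b) ∧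
      ∀ (x : Matrix (Fin 2) (Fin 2) O)
        (hx : (Ideal.Quotient.mk (Ideal.span {π ^ (r - i)})).mapMatrix x ∈ sl2),
        ((φ ⟨(Ideal.Quotient.mk (Ideal.span {π ^ (r - i)})).mapMatrix x, hx⟩).val.val :
            Matrix (Fin 2) (Fin 2) (O ⧸ Ideal.span {π ^ r})) =
          (Ideal.Quotient.mk (Ideal.span {π ^ r})).mapMatrix (1 + π ^ i • x) := by
  intro sl2 K
  set μ := muAux π r i hir with hμ
  -- products of two values of μ vanish
  have hmul : ∀ a b : O ⧸ Ideal.span {π ^ (r - i)}, μ a * μ b = 0 := by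
    intro a b
    obtain ⟨a, rfl⟩ := Ideal.Quotient.mk_surjective a
    obtain ⟨b, rfl⟩ := Ideal.Quotient.mk_surjective b
    rw [muAux_mk, muAux_mk, ← map_mul, Ideal.Quotient.eq_zero_iff_mem,
      Ideal.mem_span_singleton]
    refine ⟨π ^ (2 * i - r) * (a * b), ?_⟩
    have h : π ^ i * π ^ i = π ^ r * π ^ (2 * i - r) := by
      rw [← pow_add, ← pow_add, Nat.add_sub_cancel' h2i, two_mul]
    linear_combination a * b * h
  have hπr : (π : O) ^ (r - i) ≠ 0 := pow_ne_zero _ hπ.ne_zero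
  have hμinj : Function.Injective μ := by
    intro a b hab
    obtain ⟨a, rfl⟩ := Ideal.Quotient.mk_surjective a
    obtain ⟨b, rfl⟩ := Ideal.Quotient.mk_surjective b
    rw [muAux_mk, muAux_mk, Ideal.Quotient.eq, Ideal.mem_span_singleton] at hab
    obtain ⟨c, hc⟩ := hab
    rw [Ideal.Quotient.eq, Ideal.mem_span_singleton]
    refine ⟨c, mul_left_cancel₀ (pow_ne_zero i hπ.ne_zero) ?_⟩
    rw [← mul_sub] at hc
    rw [hc, ← mul_assoc, ← pow_add, Nat.add_sub_cancel' hir]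
  set f := Ideal.Quotient.factor (S := Ideal.span {π ^ r}) (T := Ideal.span {π ^ i})
      (Ideal.span_singleton_le_span_singleton.mpr (pow_dvd_pow π hir)) with hf
  have hfμ : ∀ a, f (μ a) = 0 := by
    intro a
    obtain ⟨a, rfl⟩ := Ideal.Quotient.mk_surjective a
    rw [hμ, muAux_mk, hf, Ideal.Quotient.factor_mk, Ideal.Quotient.eq_zero_iff_mem,
      Ideal.mem_span_singleton]
    exact Dvd.intro a rfl
  have hker : ∀ c : O ⧸ Ideal.span {π ^ r}, f c = 0 → ∃ d, μ d = c := by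
    intro c hc
    obtain ⟨a, rfl⟩ := Ideal.Quotient.mk_surjective c
    rw [hf, Ideal.Quotient.factor_mk, Ideal.Quotient.eq_zero_iff_mem,
      Ideal.mem_span_singleton] at hc
    obtain ⟨b, rfl⟩ := hc
    exact ⟨Ideal.Quotient.mk _ b, muAux_mk ..⟩
  -- determinant formula
  have hdet : ∀ y : Matrix (Fin 2) (Fin 2) (O ⧸ Ideal.span {π ^ (r - i)}),
      Matrix.det (1 + y.map μ) = 1 + μ (y 0 0 + y 1 1) := by
    intro y
    rw [Matrix.det_fin_two]
    simp only [Matrix.add_apply, Matrix.map_apply, Matrix.one_apply_eq,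
      Matrix.one_apply_ne (show (0 : Fin 2) ≠ 1 by decide),
      Matrix.one_apply_ne (show (1 : Fin 2) ≠ 0 by decide), zero_add, map_add]
    linear_combination hmul (y 0 0) (y 1 1) - hmul (y 0 1) (y 1 0)
  have htrace : ∀ y : Matrix (Fin 2) (Fin 2) (O ⧸ Ideal.span {π ^ (r - i)}),
      y ∈ sl2 ↔ y 0 0 + y 1 1 = 0 := by
    intro y
    rw [LinearMap.mem_ker, Matrix.traceLinearMap_apply, Matrix.trace_fin_two]
  -- product of two mapped matrices vanishes
  have hmm : ∀ x y : Matrix (Fin 2) (Fin 2) (O ⧸ Ideal.span {π ^ (r - i)}),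
      (x.map μ) * (y.map μ) = 0 := by
    intro x y
    ext a b
    rw [Matrix.mul_apply]
    simp [Matrix.map_apply, hmul]
  have hmulF : ∀ x y : Matrix (Fin 2) (Fin 2) (O ⧸ Ideal.span {π ^ (r - i)}),
      (1 + x.map μ) * (1 + y.map μ) = 1 + (x + y).map μ := by
    intro x y
    have hadd : (x + y).map μ = x.map μ + y.map μ := by
      ext a b; simp [Matrix.map_apply, map_add]
    rw [hadd, add_mul, one_mul, mul_add, mul_one, hmm, add_zero]
    abel
  -- the forward map
  have hKmem : ∀ y : Matrix (Fin 2) (Fin 2) (O ⧸ Ideal.span {π ^ (r - i)}),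
      f.mapMatrix (1 + y.map μ) = 1 := by
    intro y
    rw [RingHom.mapMatrix_apply]
    have h0 : (y.map μ).map f = 0 := by
      ext a b; simp [Matrix.map_apply, hfμ]
    have h1 : ((1 + y.map μ).map f) = (1 : Matrix (Fin 2) (Fin 2) _).map f + (y.map μ).map f := by
      ext a b; simp [Matrix.map_apply, Matrix.one_apply, apply_ite f]
    rw [h1, h0, add_zero, Matrix.map_one f f.map_zero f.map_one]
  let F : sl2 → K := fun x =>
    ⟨⟨1 + (x.val).map μ, by rw [hdet, (htrace x.val).mp x.prop, map_zero, add_zero]⟩,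
      MonoidHom.mem_ker.mpr (Subtype.ext (hKmem x.val))⟩
  have hFval : ∀ x : sl2, ((F x).val.val : Matrix (Fin 2) (Fin 2) _) = 1 + (x.val).map μ :=
    fun x => rfl
  have hFinj : Function.Injective F := by
    intro x y hxy
    have h1 : (1 : Matrix (Fin 2) (Fin 2) (O ⧸ Ideal.span {π ^ r})) + (x.val).map μ
        = 1 + (y.val).map μ := by
      rw [← hFval, ← hFval, hxy]
    have h2 : (x.val).map μ = (y.val).map μ := by
      exact add_left_cancel h1
    apply Subtype.ext
    ext a b
    exact hμinj (congrFun (congrFun h2 a) b)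
  have hFsurj : Function.Surjective F := by
    intro g
    have hg : f.mapMatrix g.val.val = 1 := by
      have := g.prop
      rw [MonoidHom.mem_ker] at this
      exact congrArg Subtype.val this
    have hent : ∀ a b, f ((g.val.val - 1) a b) = 0 := by
      intro a b
      have h1 : f (g.val.val a b) = (1 : Matrix (Fin 2) (Fin 2) _) a b := by
        have h2 : (f.mapMatrix g.val.val) a b = (1 : Matrix (Fin 2) (Fin 2) _) a b := by
          rw [hg]
        simpa [RingHom.mapMatrix_apply, Matrix.map_apply] using h2
      simp only [Matrix.sub_apply, map_sub, h1]
      rcases eq_or_ne a b with h | h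
      · simp [h, Matrix.one_apply]
      · simp [Matrix.one_apply_ne h]
    choose d hd using fun a b => hker _ (hent a b)
    set y : Matrix (Fin 2) (Fin 2) (O ⧸ Ideal.span {π ^ (r - i)}) := Matrix.of d with hy
    have hmap : y.map μ = g.val.val - 1 := by
      ext a b
      exact hd a b
    have hgv : (g.val.val : Matrix (Fin 2) (Fin 2) _) = 1 + y.map μ := by
      rw [hmap]; abel
    have hysl : y ∈ sl2 := by
      rw [htrace]
      apply hμinj
      rw [map_zero]
      have hdg : Matrix.det (1 + y.map μ) = 1 := by rw [← hgv]; exact g.val.prop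
      rw [hdet] at hdg
      exact add_left_cancel (hdg.trans (add_zero 1).symm)
    exact ⟨⟨y, hysl⟩, Subtype.ext (Subtype.ext (by rw [hFval, ← hgv]))⟩
  refine ⟨Equiv.ofBijective F ⟨hFinj, hFsurj⟩, ?_, ?_⟩
  · intro a b
    apply Subtype.ext
    apply Subtype.ext
    show ((F (a + b)).val.val : Matrix (Fin 2) (Fin 2) _) = (F a).val.val * (F b).val.val
    rw [hFval, hFval, hFval, hmulF]
    rfl
  · intro x hx
    show ((F ⟨_, hx⟩).val.val : Matrix (Fin 2) (Fin 2) _) = _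
    rw [hFval]
    ext a b
    simp only [Matrix.add_apply, Matrix.map_apply, RingHom.mapMatrix_apply,
      Matrix.smul_apply, Matrix.one_apply, smul_eq_mul]
    rw [hμ, muAux_mk]
    rcases eq_or_ne a b with h | h <;> simp [h, map_add]
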